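/- Let m ≥ 1, n = m+1, h > 0, z_F > 0, and let D ∈ ℝⁿ have entries D_1,…,D_n with D_k > 0 for all k. With the convention v₀ := 0 and D_{k+1/2} := (D_k + D_{k+1})/2, set Term₁(v) = (1/z_F)·Σ_{k=1}^{m} h·D_{k+1/2}·((v_k − v_{k−1})/h)² and S_h = z_F·Σ_{k=1}^{m} h/D_{k+1/2}. If moreover m·h ≤ 1, then for every v ∈ ℝ^m the generalized discrete Poincaré inequality holds: h·Σ_{i=1}^{m} v_i² ≤ S_h·Term₁(v). -/

import Mathlib

open Finset

/-- 1-based access to the entries of a finite vector, with value `0` at index `0`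
and out of range (this encodes the convention `v₀ = 0`). -/
def pad1 {n : ℕ} (v : Fin n → ℝ) : ℕ → ℝ :=
  fun k => if hk : k - 1 < n then (if k = 0 then 0 else v ⟨k - 1, hk⟩) else 0

/-- `D_{k+1/2} = (D_k + D_{k+1})/2` (1-based mathematical indexing). -/
noncomputable def Dhalf {n : ℕ} (D : Fin n → ℝ) (k : ℕ) : ℝ :=
  (pad1 D k + pad1 D (k + 1)) / 2

/-- `Term₁(v) = (1/z_F) Σ_{k=1}^m h D_{k+1/2} ((v_k − v_{k−1})/h)²` with `v₀ = 0`. -/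
noncomputable def term1 (m : ℕ) (h zF : ℝ) (D : Fin (m + 1) → ℝ) (v : Fin m → ℝ) : ℝ :=
  (1 / zF) * ∑ k ∈ Finset.Icc 1 m,
    h * Dhalf D k * ((pad1 v k - pad1 v (k - 1)) / h) ^ 2

/-- `S_h = z_F Σ_{k=1}^m h / D_{k+1/2}`. -/
noncomputable def Sh (m : ℕ) (h zF : ℝ) (D : Fin (m + 1) → ℝ) : ℝ :=
  zF * ∑ k ∈ Finset.Icc 1 m, h / Dhalf D k

theorem stmt_14 (m : ℕ) (hm : 1 ≤ m) (h zF : ℝ) (hh : 0 < h) (hzF : 0 < zF)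
    (hmh : (m : ℝ) * h ≤ 1)
    (D : Fin (m + 1) → ℝ) (hD : ∀ k, 0 < D k) :
    ∀ v : Fin m → ℝ,
      h * ∑ i : Fin m, (v i) ^ 2 ≤ Sh m h zF D * term1 m h zF D v := by
  intro v
  have hh' : h ≠ 0 := hh.ne'
  have hz' : zF ≠ 0 := hzF.ne'
  set w : ℕ → ℝ := fun k => Dhalf D k with hw
  set d : ℕ → ℝ := fun k => pad1 v k - pad1 v (k - 1) with hd
  have hwpos : ∀ k ∈ Finset.Icc 1 m, 0 < w k := by
    intro k hk
    rw [Finset.mem_Icc] at hk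
    obtain ⟨hk1', hk2'⟩ := hk
    have hk1 : k - 1 < m + 1 := by omega
    have hk2 : k + 1 - 1 < m + 1 := by omega
    have hne : k ≠ 0 := by omega
    have hne2 : k + 1 ≠ 0 := by omega
    show 0 < (pad1 D k + pad1 D (k + 1)) / 2
    rw [pad1, pad1]
    simp only [dif_pos hk1, dif_pos hk2, if_neg hne, if_neg hne2]
    have g1 := hD ⟨k - 1, hk1⟩
    have g2 := hD ⟨k + 1 - 1, hk2⟩
    linarith
  set A := ∑ k ∈ Finset.Icc 1 m, (w k)⁻¹ with hA
  set B := ∑ k ∈ Finset.Icc 1 m, w k * d k ^ 2 with hB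
  have hAnn : 0 ≤ A :=
    Finset.sum_nonneg fun k hk => inv_nonneg.2 (hwpos k hk).le
  have hBnn : 0 ≤ B :=
    Finset.sum_nonneg fun k hk => mul_nonneg (hwpos k hk).le (sq_nonneg _)
  -- telescoping
  have hpad0 : pad1 v 0 = 0 := by
    have h0 : (0 : ℕ) - 1 < m := by omega
    simp [pad1, h0]
  have htel : ∀ i, i ≤ m → pad1 v i = ∑ k ∈ Finset.Icc 1 i, d k := by
    intro i
    induction i with
    | zero => intro _; simp [hpad0]
    | succ i ih =>
      intro hi
      rw [Finset.sum_Icc_succ_top (by omega : 1 ≤ i + 1), ← ih (by omega)]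
      show pad1 v (i + 1) = pad1 v i + (pad1 v (i + 1) - pad1 v (i + 1 - 1))
      rw [Nat.add_sub_cancel]
      ring
  -- Cauchy-Schwarz
  have key : ∀ i ∈ Finset.Icc 1 m, (pad1 v i) ^ 2 ≤ A * B := by
    intro i hi
    rw [Finset.mem_Icc] at hi
    rw [htel i hi.2]
    have hsub : Finset.Icc 1 i ⊆ Finset.Icc 1 m := Finset.Icc_subset_Icc_right hi.2
    have hcs : (∑ k ∈ Finset.Icc 1 i, d k) ^ 2 ≤
        (∑ k ∈ Finset.Icc 1 i, (w k)⁻¹) * (∑ k ∈ Finset.Icc 1 i, w k * d k ^ 2) := by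
      have cs := Finset.sum_mul_sq_le_sq_mul_sq (Finset.Icc 1 i)
        (fun k => (Real.sqrt (w k))⁻¹) (fun k => Real.sqrt (w k) * d k)
      have e1 : ∑ k ∈ Finset.Icc 1 i, (Real.sqrt (w k))⁻¹ * (Real.sqrt (w k) * d k)
          = ∑ k ∈ Finset.Icc 1 i, d k := by
        refine Finset.sum_congr rfl fun k hk => ?_
        have hwk := hwpos k (hsub hk)
        have hs : Real.sqrt (w k) ≠ 0 := (Real.sqrt_pos.2 hwk).ne'
        field_simp
      have e2 : ∑ k ∈ Finset.Icc 1 i, ((Real.sqrt (w k))⁻¹) ^ 2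
          = ∑ k ∈ Finset.Icc 1 i, (w k)⁻¹ := by
        refine Finset.sum_congr rfl fun k hk => ?_
        rw [← Real.sqrt_inv, Real.sq_sqrt (inv_nonneg.2 (hwpos k (hsub hk)).le)]
      have e3 : ∑ k ∈ Finset.Icc 1 i, (Real.sqrt (w k) * d k) ^ 2
          = ∑ k ∈ Finset.Icc 1 i, w k * d k ^ 2 := by
        refine Finset.sum_congr rfl fun k hk => ?_
        rw [mul_pow, Real.sq_sqrt (hwpos k (hsub hk)).le]
      rw [e1, e2, e3] at cs
      exact cs
    refine hcs.trans (mul_le_mul ?_ ?_ ?_ hAnn)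
    · exact Finset.sum_le_sum_of_subset_of_nonneg hsub
        (fun k hk _ => inv_nonneg.2 (hwpos k hk).le)
    · exact Finset.sum_le_sum_of_subset_of_nonneg hsub
        (fun k hk _ => mul_nonneg (hwpos k hk).le (sq_nonneg _))
    · exact Finset.sum_nonneg fun k hk => mul_nonneg (hwpos k (hsub hk)).le (sq_nonneg _)
  -- LHS rewriting
  have hpad : ∀ i : Fin m, pad1 v (1 + (i : ℕ)) = v i := by
    intro i
    have h1 : 1 + (i : ℕ) - 1 < m := by omega
    have h2 : 1 + (i : ℕ) ≠ 0 := by omega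
    rw [pad1]
    simp only [dif_pos h1, if_neg h2]
    have : (⟨1 + (i : ℕ) - 1, h1⟩ : Fin m) = i := by
      apply Fin.ext
      simp
    rw [this]
  have hLHS : ∑ i ∈ Finset.Icc 1 m, (pad1 v i) ^ 2 = ∑ i : Fin m, (v i) ^ 2 := by
    rw [show Finset.Icc 1 m = Finset.Ico 1 (m + 1) by rw [Finset.Ico_add_one_right_eq_Icc],
      Finset.sum_Ico_eq_sum_range]
    simp only [Nat.add_sub_cancel]
    rw [← Fin.sum_univ_eq_sum_range (fun i => (pad1 v (1 + i)) ^ 2) m]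
    exact Finset.sum_congr rfl fun i _ => by rw [hpad]
  -- RHS identity
  have hRHS : Sh m h zF D * term1 m h zF D v = A * B := by
    rw [Sh, term1]
    have e1 : ∑ k ∈ Finset.Icc 1 m, h / Dhalf D k = h * A := by
      rw [hA, Finset.mul_sum]
      exact Finset.sum_congr rfl fun k _ => div_eq_mul_inv _ _
    have e2 : ∑ k ∈ Finset.Icc 1 m,
        h * Dhalf D k * ((pad1 v k - pad1 v (k - 1)) / h) ^ 2 = B / h := by
      rw [hB, Finset.sum_div]
      refine Finset.sum_congr rfl fun k _ => ?_
      show h * w k * (d k / h) ^ 2 = w k * d k ^ 2 / h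
      field_simp
    rw [e1, e2]
    field_simp
  have hcard : ∑ i ∈ Finset.Icc 1 m, (pad1 v i) ^ 2 ≤ (m : ℝ) * (A * B) := by
    calc ∑ i ∈ Finset.Icc 1 m, (pad1 v i) ^ 2
        ≤ ∑ _i ∈ Finset.Icc 1 m, A * B := Finset.sum_le_sum key
      _ = (m : ℝ) * (A * B) := by
          rw [Finset.sum_const, Nat.card_Icc, nsmul_eq_mul]
          norm_num
  calc h * ∑ i : Fin m, (v i) ^ 2
      = h * ∑ i ∈ Finset.Icc 1 m, (pad1 v i) ^ 2 := by rw [hLHS]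
    _ ≤ h * ((m : ℝ) * (A * B)) := mul_le_mul_of_nonneg_left hcard hh.le
    _ = ((m : ℝ) * h) * (A * B) := by ring
    _ ≤ 1 * (A * B) := mul_le_mul_of_nonneg_right hmh (mul_nonneg hAnn hBnn)
    _ = Sh m h zF D * term1 m h zF D v := by rw [one_mul, hRHS]
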